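/- Failure of TA preservation in the two-level construction: let C' = {011, 022, 833, 844, 105, 550, 206, 660} ⊆ {0,...,8}^3 with groups C'₁ = {011,022}, C'₂ = {833,844}, C'₃ = {105,550}, C'₄ = {206,660}. Then C' is not a (T,2)-TA code for any T ≥ 3; specifically, for U = {011, 105, 550} we have 000 ∈ desc(U), the codeword 206 achieves the minimum Hamming distance from 000 to C', but 𝒢(206) = 4 ∉ 𝒢(U) = {1,3}. -/

import Mathlib

def desc {Q : Type*} {ℓ : ℕ} (X : Set (Fin ℓ → Q)) : Set (Fin ℓ → Q) :=
  {d | ∀ i, ∃ x ∈ X, d i = x i}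

def codeC' : Set (Fin 3 → Fin 9) :=
  {![0,1,1], ![0,2,2], ![8,3,3], ![8,4,4], ![1,0,5], ![5,5,0], ![2,0,6], ![6,6,0]}

theorem twoLevel_TA_fails (G : (Fin 3 → Fin 9) → ℕ)
    (hG1 : G ![0,1,1] = 1) (hG2 : G ![0,2,2] = 1)
    (hG3 : G ![8,3,3] = 2) (hG4 : G ![8,4,4] = 2)
    (hG5 : G ![1,0,5] = 3) (hG6 : G ![5,5,0] = 3)
    (hG7 : G ![2,0,6] = 4) (hG8 : G ![6,6,0] = 4) :
    ((![0,0,0] : Fin 3 → Fin 9) ∈ desc ({![0,1,1], ![1,0,5], ![5,5,0]} : Set (Fin 3 → Fin 9))) ∧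
    hammingDist (![0,0,0] : Fin 3 → Fin 9) ![2,0,6] = 2 ∧
    (∀ c ∈ codeC', 2 ≤ hammingDist (![0,0,0] : Fin 3 → Fin 9) c) ∧
    G ![2,0,6] ∉ G '' ({![0,1,1], ![1,0,5], ![5,5,0]} : Set (Fin 3 → Fin 9)) ∧
    (∀ T : ℕ, 3 ≤ T →
      ¬ (∀ X ⊆ codeC', X.Finite → X.ncard ≤ T → ∀ x ∈ desc X,
          ∀ z ∈ codeC',
            (∀ c ∈ codeC', hammingDist x z ≤ hammingDist x c) → G z ∈ G '' X)) := by
  have hdesc : (![0,0,0] : Fin 3 → Fin 9) ∈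
      desc ({![0,1,1], ![1,0,5], ![5,5,0]} : Set (Fin 3 → Fin 9)) := by
    intro i
    fin_cases i
    · exact ⟨![0,1,1], Or.inl rfl, by decide⟩
    · exact ⟨![1,0,5], Or.inr (Or.inl rfl), by decide⟩
    · exact ⟨![5,5,0], Or.inr (Or.inr rfl), by decide⟩
  have hdist : hammingDist (![0,0,0] : Fin 3 → Fin 9) ![2,0,6] = 2 := by decide
  have hmin : ∀ c ∈ codeC', 2 ≤ hammingDist (![0,0,0] : Fin 3 → Fin 9) c := by
    intro c hc
    rcases hc with h|h|h|h|h|h|h|h <;> subst h <;> decide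
  have himg : G ![2,0,6] ∉
      G '' ({![0,1,1], ![1,0,5], ![5,5,0]} : Set (Fin 3 → Fin 9)) := by
    rintro ⟨z, hz, hzG⟩
    rcases hz with h|h|h <;> subst h <;> omega
  refine ⟨hdesc, hdist, hmin, himg, ?_⟩
  intro T hT h
  apply himg
  have hsub : ({![0,1,1], ![1,0,5], ![5,5,0]} : Set (Fin 3 → Fin 9)) ⊆ codeC' := by
    rintro z (h|h|h)
    · exact Or.inl h
    · exact Or.inr (Or.inr (Or.inr (Or.inr (Or.inl h))))
    · exact Or.inr (Or.inr (Or.inr (Or.inr (Or.inr (Or.inl h)))))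
  have hfin : ({![0,1,1], ![1,0,5], ![5,5,0]} : Set (Fin 3 → Fin 9)).Finite :=
    (Set.finite_singleton _).insert _ |>.insert _
  have hcard : ({![0,1,1], ![1,0,5], ![5,5,0]} : Set (Fin 3 → Fin 9)).ncard ≤ T := by
    calc _ ≤ 3 := by
          apply le_trans (Set.ncard_insert_le _ _)
          have := Set.ncard_insert_le (![1,0,5] : Fin 3 → Fin 9) {![5,5,0]}
          simp [Set.ncard_singleton] at this ⊢ <;> omega
      _ ≤ T := hT
  have h206 : (![2,0,6] : Fin 3 → Fin 9) ∈ codeC' := by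
    exact Or.inr (Or.inr (Or.inr (Or.inr (Or.inr (Or.inr (Or.inl rfl))))))
  exact h _ hsub hfin hcard _ hdesc _ h206 (fun c hc => by rw [hdist]; exact hmin c hc)
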